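/- Let T = (t_{ij}) be a rapidly decreasing matrix with entries in A (i.e. sup_{i,j∈ℕ} (max(i,j))^m·‖t_{ij}‖ < ∞ for every m ∈ ℕ₀) such that sup_{i,j∈ℕ} (max(i,j))^2·‖t_{ij}‖ < 6/π². Then T is quasi-invertible within the rapidly decreasing matrices: there exists a rapidly decreasing matrix Y with entries in A such that TY = YT and T + Y − TY = 0 (products taken as the entrywise matrix product by absolutely convergent series). -/

import Mathlib

open Real


/-- A matrix `T` over `A` is rapidly decreasing if
`sup_{i,j} (max(i,j))^m·‖t_{ij}‖ < ∞` for every `m ∈ ℕ₀`. -/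
def RapidlyDecreasing {A : Type*} [NonUnitalNormedRing A]
    (T : ℕ+ → ℕ+ → A) : Prop :=
  ∀ m : ℕ, BddAbove
    (Set.range fun p : ℕ+ × ℕ+ => (((max p.1 p.2 : ℕ+) : ℕ) : ℝ) ^ m * ‖T p.1 p.2‖)

/-- The entrywise matrix product `(RS)_{ij} = ∑_k r_{ik} s_{kj}`. -/
noncomputable def matMul {A : Type*} [NonUnitalNormedRing A]
    (R S : ℕ+ → ℕ+ → A) : ℕ+ → ℕ+ → A :=
  fun i j => ∑' k : ℕ+, R i k * S k j

namespace RDQI15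


/-- real value of max index -/
noncomputable def MM (i j : ℕ+) : ℝ := ((max i j : ℕ+) : ℕ)

lemma pmax_coe (i j : ℕ+) : ((max i j : ℕ+) : ℕ) = max (i:ℕ) (j:ℕ) := by
  rcases le_total i j with h | h
  · rw [max_eq_right h, max_eq_right ((PNat.coe_le_coe _ _).mpr h)]
  · rw [max_eq_left h, max_eq_left ((PNat.coe_le_coe _ _).mpr h)]

lemma one_le_MM (i j : ℕ+) : 1 ≤ MM i j := by
  have : 1 ≤ ((max i j : ℕ+) : ℕ) := (max i j).pos
  unfold MM
  exact_mod_cast this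

lemma MM_pos (i j : ℕ+) : 0 < MM i j := lt_of_lt_of_le one_pos (one_le_MM i j)

lemma left_le_MM (i j : ℕ+) : ((i:ℕ):ℝ) ≤ MM i j := by
  unfold MM; rw [pmax_coe]; exact_mod_cast le_max_left (i:ℕ) (j:ℕ)

lemma right_le_MM (i j : ℕ+) : ((j:ℕ):ℝ) ≤ MM i j := by
  unfold MM; rw [pmax_coe]; exact_mod_cast le_max_right (i:ℕ) (j:ℕ)

lemma nat_key (i j k : ℕ) (hi : 1 ≤ i) (hj : 1 ≤ j) (hk : 1 ≤ k) :
    max i j * k ≤ max i k * max k j := by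
  rcases le_total i j with h1 | h1 <;> rcases le_total k i with h2 | h2 <;>
    rcases le_total k j with h3 | h3 <;>
    simp [max_eq_left, max_eq_right, *] <;> nlinarith

lemma key_mul (i j k : ℕ+) : MM i j * ((k:ℕ):ℝ) ≤ MM i k * MM k j := by
  unfold MM
  rw [pmax_coe, pmax_coe, pmax_coe]
  exact_mod_cast nat_key (i:ℕ) (j:ℕ) (k:ℕ) i.one_le j.one_le k.one_le

lemma MM_le_mul (i j : ℕ+) : MM i j ≤ ((i:ℕ):ℝ) * ((j:ℕ):ℝ) := by
  unfold MM; rw [pmax_coe]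
  have : max (i:ℕ) (j:ℕ) ≤ (i:ℕ) * (j:ℕ) := by
    rcases le_total (i:ℕ) (j:ℕ) with h | h
    · rw [max_eq_right h]; nlinarith [i.pos, j.pos]
    · rw [max_eq_left h]; nlinarith [i.pos, j.pos]
  exact_mod_cast this

lemma pnat_hasSum_inv_sq : HasSum (fun k : ℕ+ => (1:ℝ) / ((k:ℕ):ℝ)^2) (π^2/6) := by
  have h := hasSum_zeta_two
  have hinj : Function.Injective (fun k : ℕ+ => (k : ℕ)) := fun a b hab => PNat.coe_injective hab
  rw [← Function.Injective.hasSum_iff hinj ?_] at h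
  · exact h
  · intro n hn
    have : n = 0 := by
      by_contra h0
      exact hn ⟨⟨n, Nat.pos_of_ne_zero h0⟩, rfl⟩
    simp [this]

lemma summable_inv_sq : Summable (fun k : ℕ+ => (1:ℝ) / ((k:ℕ):ℝ)^2) :=
  pnat_hasSum_inv_sq.summable

lemma tsum_inv_sq : ∑' k : ℕ+, (1:ℝ) / ((k:ℕ):ℝ)^2 = π^2/6 :=
  pnat_hasSum_inv_sq.tsum_eq

lemma kpos (k : ℕ+) : (0:ℝ) < ((k:ℕ):ℝ) := by exact_mod_cast k.pos

variable {A : Type*} [NonUnitalNormedRing A] [CompleteSpace A]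

/-- master helper -/
lemma helperH {f g : ℕ+ → A} {c : ℝ}
    (h : ∀ k, ‖f k * g k‖ ≤ c * (1/((k:ℕ):ℝ)^2)) :
    Summable (fun k => f k * g k) ∧ ‖∑' k, f k * g k‖ ≤ c * (π^2/6) := by
  have hsum : Summable (fun k : ℕ+ => c * (1/((k:ℕ):ℝ)^2)) := summable_inv_sq.mul_left c
  have hnorm : Summable (fun k : ℕ+ => ‖f k * g k‖) :=
    Summable.of_nonneg_of_le (fun k => norm_nonneg _) h hsum
  have hS : Summable (fun k => f k * g k) := hnorm.of_norm
  refine ⟨hS, ?_⟩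
  calc ‖∑' k, f k * g k‖ ≤ ∑' k, ‖f k * g k‖ := norm_tsum_le_tsum_norm hnorm
    _ ≤ ∑' k : ℕ+, c * (1/((k:ℕ):ℝ)^2) := Summable.tsum_le_tsum h hnorm hsum
    _ = c * ∑' k : ℕ+, (1/((k:ℕ):ℝ)^2) := tsum_mul_left
    _ = c * (π^2/6) := by rw [tsum_inv_sq]

lemma term_bound {a b x y z w : ℝ} (ha : 0 ≤ a) (hb : 0 ≤ b) (hx : 0 < x) (hy : 0 < y)
    (hz : 0 < z) (hw : 0 < w) (h : z * w ≤ x * y) :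
    a / x * (b / y) ≤ a * b / z * (1 / w) := by
  rw [div_mul_div_comm, div_mul_div_comm, mul_one]
  gcongr

lemma lemA {f g : ℕ+ → A} {a b : ℝ} (ha : 0 ≤ a) (hb : 0 ≤ b) (i j : ℕ+)
    (hf : ∀ k, ‖f k‖ ≤ a / (MM i k)^2) (hg : ∀ k, ‖g k‖ ≤ b / (MM k j)^2) :
    Summable (fun k => f k * g k) ∧
      ‖∑' k, f k * g k‖ ≤ a * b / (MM i j)^2 * (π^2/6) := by
  apply helperH
  intro k
  calc ‖f k * g k‖ ≤ ‖f k‖ * ‖g k‖ := norm_mul_le _ _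
    _ ≤ a / (MM i k)^2 * (b / (MM k j)^2) := by
        apply mul_le_mul (hf k) (hg k) (norm_nonneg _)
        positivity
    _ ≤ a * b / (MM i j)^2 * (1/((k:ℕ):ℝ)^2) := by
        apply term_bound ha hb (pow_pos (MM_pos i k) 2) (pow_pos (MM_pos k j) 2)
          (pow_pos (MM_pos i j) 2) (pow_pos (kpos k) 2)
        calc (MM i j)^2 * ((k:ℕ):ℝ)^2 = (MM i j * ((k:ℕ):ℝ))^2 := by ring
          _ ≤ (MM i k * MM k j)^2 := by
              apply pow_le_pow_left₀
                (mul_nonneg (le_of_lt (MM_pos i j)) (le_of_lt (kpos k))) (key_mul i j k)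
          _ = (MM i k)^2 * (MM k j)^2 := by ring

lemma lemB {f g : ℕ+ → A} {a b : ℝ} (ha : 0 ≤ a) (hb : 0 ≤ b) (m : ℕ) (k j : ℕ+)
    (hf : ∀ l, ‖f l‖ ≤ a / (MM k l)^2) (hg : ∀ l, ‖g l‖ ≤ b / (MM l j)^(m+2)) :
    Summable (fun l => f l * g l) ∧
      ‖∑' l, f l * g l‖ ≤ a * b / ((j:ℕ):ℝ)^m * (π^2/6) := by
  apply helperH
  intro l
  calc ‖f l * g l‖ ≤ ‖f l‖ * ‖g l‖ := norm_mul_le _ _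
    _ ≤ a / (MM k l)^2 * (b / (MM l j)^(m+2)) := by
        apply mul_le_mul (hf l) (hg l) (norm_nonneg _)
        exact div_nonneg ha (le_of_lt (pow_pos (MM_pos k l) 2))
    _ ≤ a * b / ((j:ℕ):ℝ)^m * (1/((l:ℕ):ℝ)^2) := by
        apply term_bound ha hb (pow_pos (MM_pos k l) 2) (pow_pos (MM_pos l j) (m+2))
          (pow_pos (kpos j) m) (pow_pos (kpos l) 2)
        calc ((j:ℕ):ℝ)^m * ((l:ℕ):ℝ)^2 ≤ (MM l j)^m * (MM k l)^2 := by
              apply mul_le_mul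
              · exact pow_le_pow_left₀ (le_of_lt (kpos j)) (right_le_MM l j) m
              · exact pow_le_pow_left₀ (le_of_lt (kpos l)) (right_le_MM k l) 2
              · exact le_of_lt (pow_pos (kpos l) 2)
              · exact pow_nonneg (le_of_lt (MM_pos l j)) m
          _ ≤ (MM k l)^2 * (MM l j)^(m+2) := by
              rw [pow_add]
              have h1 : (1:ℝ) ≤ (MM l j)^2 := one_le_pow₀ (one_le_MM l j)
              have h2 : (0:ℝ) ≤ MM l j ^ m * MM k l ^ 2 :=
                mul_nonneg (pow_nonneg (le_of_lt (MM_pos l j)) m)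
                  (le_of_lt (pow_pos (MM_pos k l) 2))
              calc MM l j ^ m * MM k l ^ 2 = MM l j ^ m * MM k l ^ 2 * 1 := (mul_one _).symm
                _ ≤ MM l j ^ m * MM k l ^ 2 * (MM l j ^ 2) :=
                    mul_le_mul_of_nonneg_left h1 h2
                _ = MM k l ^ 2 * (MM l j ^ m * MM l j ^ 2) := by ring

lemma lemC {f g : ℕ+ → A} {a b : ℝ} (ha : 0 ≤ a) (hb : 0 ≤ b) (m : ℕ) (i : ℕ+)
    (hf : ∀ k, ‖f k‖ ≤ a / (MM i k)^(m+2)) (hg : ∀ k, ‖g k‖ ≤ b) :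
    Summable (fun k => f k * g k) ∧
      ‖∑' k, f k * g k‖ ≤ a * b / ((i:ℕ):ℝ)^m * (π^2/6) := by
  apply helperH
  intro k
  calc ‖f k * g k‖ ≤ ‖f k‖ * ‖g k‖ := norm_mul_le _ _
    _ ≤ a / (MM i k)^(m+2) * b := by
        apply mul_le_mul (hf k) (hg k) (norm_nonneg _)
        exact div_nonneg ha (le_of_lt (pow_pos (MM_pos i k) (m+2)))
    _ ≤ a * b / ((i:ℕ):ℝ)^m * (1/((k:ℕ):ℝ)^2) := by
        have he : a / (MM i k)^(m+2) * b = a / (MM i k)^(m+2) * (b / 1) := by rw [div_one]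
        rw [he]
        apply term_bound ha hb (pow_pos (MM_pos i k) (m+2)) one_pos
          (pow_pos (kpos i) m) (pow_pos (kpos k) 2)
        rw [mul_one]
        calc ((i:ℕ):ℝ)^m * ((k:ℕ):ℝ)^2 ≤ (MM i k)^m * (MM i k)^2 := by
              apply mul_le_mul
              · exact pow_le_pow_left₀ (le_of_lt (kpos i)) (left_le_MM i k) m
              · exact pow_le_pow_left₀ (le_of_lt (kpos k)) (right_le_MM i k) 2
              · exact le_of_lt (pow_pos (kpos k) 2)
              · exact pow_nonneg (le_of_lt (MM_pos i k)) m
          _ = (MM i k)^(m+2) := by rw [← pow_add]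


section Main

variable {A : Type*} [NonUnitalNormedRing A] [CompleteSpace A]

lemma relax_gen {c x y : ℝ} (hc : 0 ≤ c) (hy : 0 < y) (hxy : y ≤ x) : c / x ≤ c / y := by
  gcongr

/-- relax `c/(MM i j)^2 ≤ c/i^2` -/
lemma relax_left {c : ℝ} (hc : 0 ≤ c) (i j : ℕ+) : c / (MM i j)^2 ≤ c / ((i:ℕ):ℝ)^2 :=
  relax_gen hc (pow_pos (kpos i) 2) (pow_le_pow_left₀ (le_of_lt (kpos i)) (left_le_MM i j) 2)

lemma relax_right {c : ℝ} (hc : 0 ≤ c) (i j : ℕ+) : c / (MM i j)^2 ≤ c / ((j:ℕ):ℝ)^2 :=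
  relax_gen hc (pow_pos (kpos j) 2) (pow_le_pow_left₀ (le_of_lt (kpos j)) (right_le_MM i j) 2)

lemma relax_const {c : ℝ} (hc : 0 ≤ c) (i j : ℕ+) : c / (MM i j)^2 ≤ c := by
  have h1 : (1:ℝ) ≤ (MM i j)^2 := one_le_pow₀ (one_le_MM i j)
  calc c / (MM i j)^2 ≤ c / 1 := relax_gen hc one_pos h1
    _ = c := div_one c

/-- relax `c/(MM k j)^(m+2) ≤ c/j^m` -/
lemma relax_m {c : ℝ} (hc : 0 ≤ c) (m : ℕ) (k j : ℕ+) :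
    c / (MM k j)^(m+2) ≤ c / ((j:ℕ):ℝ)^m := by
  apply relax_gen hc (pow_pos (kpos j) m)
  calc ((j:ℕ):ℝ)^m ≤ (MM k j)^m :=
        pow_le_pow_left₀ (le_of_lt (kpos j)) (right_le_MM k j) m
    _ ≤ (MM k j)^(m+2) :=
        pow_le_pow_right₀ (one_le_MM k j) (by omega)

/-- Associativity of matMul under quadratic decay bounds. -/
lemma matMul_assoc {R S U : ℕ+ → ℕ+ → A} {a b c : ℝ} (ha : 0 ≤ a) (hb : 0 ≤ b) (hc : 0 ≤ c)
    (hR : ∀ i j, ‖R i j‖ ≤ a / (MM i j)^2) (hS : ∀ i j, ‖S i j‖ ≤ b / (MM i j)^2)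
    (hU : ∀ i j, ‖U i j‖ ≤ c / (MM i j)^2) :
    matMul R (matMul S U) = matMul (matMul R S) U := by
  funext i j
  have habc : Summable (fun p : ℕ+ × ℕ+ => (a * (b * c)) * ((1/((p.1:ℕ):ℝ)^2) * (1/((p.2:ℕ):ℝ)^2))) :=
    (summable_inv_sq.mul_of_nonneg summable_inv_sq
      (fun k => by positivity) (fun k => by positivity)).mul_left _
  have hbound : ∀ p : ℕ+ × ℕ+, ‖R i p.1 * (S p.1 p.2 * U p.2 j)‖ ≤
      (a * (b * c)) * ((1/((p.1:ℕ):ℝ)^2) * (1/((p.2:ℕ):ℝ)^2)) := by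
    rintro ⟨k, l⟩
    have h1 : ‖R i k‖ ≤ a / ((k:ℕ):ℝ)^2 := (hR i k).trans (relax_right ha i k)
    have h2 : ‖S k l‖ ≤ b := (hS k l).trans (relax_const hb k l)
    have h3 : ‖U l j‖ ≤ c / ((l:ℕ):ℝ)^2 := (hU l j).trans (relax_left hc l j)
    calc ‖R i k * (S k l * U l j)‖ ≤ ‖R i k‖ * ‖S k l * U l j‖ := norm_mul_le _ _
      _ ≤ ‖R i k‖ * (‖S k l‖ * ‖U l j‖) := by
          apply mul_le_mul_of_nonneg_left (norm_mul_le _ _) (norm_nonneg _)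
      _ ≤ (a / ((k:ℕ):ℝ)^2) * (b * (c / ((l:ℕ):ℝ)^2)) := by
          apply mul_le_mul h1 _ (mul_nonneg (norm_nonneg _) (norm_nonneg _)) (by positivity)
          exact mul_le_mul h2 h3 (norm_nonneg _) hb
      _ = (a * (b * c)) * ((1/((k:ℕ):ℝ)^2) * (1/((l:ℕ):ℝ)^2)) := by ring
  have hF : Summable (Function.uncurry fun k l : ℕ+ => R i k * (S k l * U l j)) :=
    Summable.of_norm_bounded habc hbound
  have hrow : ∀ k : ℕ+, Summable (fun l : ℕ+ => R i k * (S k l * U l j)) := fun k =>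
    hF.prod_factor k
  have hcol : ∀ l : ℕ+, Summable (fun k : ℕ+ => R i k * (S k l * U l j)) := fun l =>
    hF.prod_symm.prod_factor l
  have hSU : ∀ k, Summable (fun l : ℕ+ => S k l * U l j) := fun k =>
    (lemA hb hc k j (fun l => hS k l) (fun l => hU l j)).1
  have hRS : ∀ l, Summable (fun k : ℕ+ => R i k * S k l) := fun l =>
    (lemA ha hb i l (fun k => hR i k) (fun k => hS k l)).1
  calc matMul R (matMul S U) i j = ∑' k : ℕ+, R i k * ∑' l : ℕ+, S k l * U l j := rfl
    _ = ∑' (k : ℕ+) (l : ℕ+), R i k * (S k l * U l j) := by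
        exact tsum_congr fun k => ((hSU k).tsum_mul_left (R i k)).symm
    _ = ∑' (l : ℕ+) (k : ℕ+), R i k * (S k l * U l j) := by
        exact (Summable.tsum_comm' hF hrow hcol).symm
    _ = ∑' (l : ℕ+), (∑' k : ℕ+, R i k * S k l) * U l j := by
        refine tsum_congr fun l => ?_
        rw [← (hRS l).tsum_mul_right (U l j)]
        exact tsum_congr fun k => (mul_assoc _ _ _).symm
    _ = matMul (matMul R S) U i j := rfl

variable (T : ℕ+ → ℕ+ → A)

/-- powers of T : Pw T n = T^(n+1) -/
noncomputable def Pw : ℕ → ℕ+ → ℕ+ → A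
  | 0 => T
  | n+1 => matMul T (Pw n)

lemma Q_bound {C q : ℝ} (hC : 0 ≤ C) (hq : q = π^2/6 * C)
    (hT2 : ∀ i j, ‖T i j‖ ≤ C / (MM i j)^2) :
    ∀ n (i j : ℕ+), ‖Pw T n i j‖ ≤ C * q^n / (MM i j)^2 := by
  have hq0 : 0 ≤ q := by
    rw [hq]; positivity
  intro n
  induction n with
  | zero => intro i j; simpa [Pw] using hT2 i j
  | succ n ih =>
    intro i j
    have h := (lemA hC (mul_nonneg hC (pow_nonneg hq0 n)) i j
      (fun k => hT2 i k) (fun k => ih k j)).2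
    have heq : C * (C * q^n) / (MM i j)^2 * (π^2/6) = C * q^(n+1) / (MM i j)^2 := by
      rw [hq]; ring
    calc ‖Pw T (n+1) i j‖ = ‖∑' k : ℕ+, T i k * Pw T n k j‖ := rfl
      _ ≤ C * (C * q^n) / (MM i j)^2 * (π^2/6) := h
      _ = C * q^(n+1) / (MM i j)^2 := heq

lemma Pw_dec2 {C q : ℝ} (hC : 0 ≤ C) (hq : q = π^2/6 * C) (hq1 : q ≤ 1)
    (hT2 : ∀ i j, ‖T i j‖ ≤ C / (MM i j)^2) :
    ∀ n (i j : ℕ+), ‖Pw T n i j‖ ≤ C / (MM i j)^2 := by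
  have hq0 : 0 ≤ q := by rw [hq]; positivity
  intro n i j
  calc ‖Pw T n i j‖ ≤ C * q^n / (MM i j)^2 := Q_bound T hC hq hT2 n i j
    _ ≤ C / (MM i j)^2 := by
      apply (div_le_div_iff_of_pos_right (pow_pos (MM_pos i j) 2)).mpr
      calc C * q^n ≤ C * 1 :=
            mul_le_mul_of_nonneg_left (pow_le_one₀ hq0 hq1) hC
        _ = C := mul_one C

lemma Pw_comm {C q : ℝ} (hC : 0 ≤ C) (hq : q = π^2/6 * C) (hq1 : q ≤ 1)
    (hT2 : ∀ i j, ‖T i j‖ ≤ C / (MM i j)^2) :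
    ∀ n, matMul T (Pw T n) = matMul (Pw T n) T := by
  intro n
  induction n with
  | zero => rfl
  | succ n ih =>
    have hPn := Pw_dec2 T hC hq hq1 hT2 n
    calc matMul T (Pw T (n+1)) = matMul T (matMul T (Pw T n)) := rfl
      _ = matMul T (matMul (Pw T n) T) := by rw [ih]
      _ = matMul (matMul T (Pw T n)) T := matMul_assoc hC hC hC hT2 hPn hT2
      _ = matMul (Pw T (n+1)) T := rfl

lemma Pw_sandwich_eq {C q : ℝ} (hC : 0 ≤ C) (hq : q = π^2/6 * C) (hq1 : q ≤ 1)
    (hT2 : ∀ i j, ‖T i j‖ ≤ C / (MM i j)^2) (n : ℕ) :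
    Pw T (n+2) = matMul T (matMul (Pw T n) T) := by
  show matMul T (Pw T (n+1)) = matMul T (matMul (Pw T n) T)
  rw [show Pw T (n+1) = matMul T (Pw T n) from rfl, Pw_comm T hC hq hq1 hT2 n]

end Main

section Main2

variable {A : Type*} [NonUnitalNormedRing A] [CompleteSpace A] (T : ℕ+ → ℕ+ → A)

lemma Pw_m_bound {C q Cm2 : ℝ} {m : ℕ} (hC : 0 ≤ C) (hq : q = π^2/6 * C) (hq1 : q ≤ 1)
    (hCm2 : 0 ≤ Cm2)
    (hT2 : ∀ i j, ‖T i j‖ ≤ C / (MM i j)^2)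
    (hTm : ∀ i j, ‖T i j‖ ≤ Cm2 / (MM i j)^(m+2)) (n : ℕ) (i j : ℕ+) :
    ‖Pw T (n+2) i j‖ ≤
      Cm2 * ((C * q^n) * Cm2 / ((j:ℕ):ℝ)^m * (π^2/6)) / ((i:ℕ):ℝ)^m * (π^2/6) := by
  have hq0 : 0 ≤ q := by rw [hq]; positivity
  have hinner : ∀ k, ‖matMul (Pw T n) T k j‖ ≤ (C * q^n) * Cm2 / ((j:ℕ):ℝ)^m * (π^2/6) :=
    fun k => (lemB (mul_nonneg hC (pow_nonneg hq0 n)) hCm2 m k j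
      (fun l => Q_bound T hC hq hT2 n k l) (fun l => hTm l j)).2
  have hb' : 0 ≤ (C * q^n) * Cm2 / ((j:ℕ):ℝ)^m * (π^2/6) :=
    le_trans (norm_nonneg _) (hinner 1)
  have h := (lemC hCm2 hb' m i (fun k => hTm i k) hinner).2
  rw [Pw_sandwich_eq T hC hq hq1 hT2 n]
  exact h

lemma Pw_one_bound {Cm2 : ℝ} {m : ℕ} (hCm2 : 0 ≤ Cm2)
    (hTm : ∀ i j, ‖T i j‖ ≤ Cm2 / (MM i j)^(m+2)) (i j : ℕ+) :
    ‖Pw T 1 i j‖ ≤ Cm2 * (Cm2 / ((j:ℕ):ℝ)^m) / ((i:ℕ):ℝ)^m * (π^2/6) := by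
  have hg : ∀ k, ‖T k j‖ ≤ Cm2 / ((j:ℕ):ℝ)^m := fun k => (hTm k j).trans (relax_m hCm2 m k j)
  exact (lemC hCm2 (le_trans (norm_nonneg _) (hg 1)) m i (fun k => hTm i k) hg).2

end Main2

end RDQI15

open RDQI15 Real in
/-- If `T` is a rapidly decreasing matrix over `A` with
`sup_{i,j} (max(i,j))²·‖t_{ij}‖ < 6/π²`, then `T` is quasi-invertible within the rapidly
decreasing matrices: there is a rapidly decreasing `Y` with `TY = YT` and `T + Y − TY = 0`. -/
theorem rapidlyDecreasing_quasi_invertible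
    {A : Type*} [NonUnitalNormedRing A] [CompleteSpace A]
    (T : ℕ+ → ℕ+ → A) (hT : RapidlyDecreasing T)
    (hsmall : sSup (Set.range fun p : ℕ+ × ℕ+ =>
        (((max p.1 p.2 : ℕ+) : ℕ) : ℝ) ^ 2 * ‖T p.1 p.2‖) < 6 / Real.pi ^ 2) :
    ∃ Y : ℕ+ → ℕ+ → A, RapidlyDecreasing Y ∧
      matMul T Y = matMul Y T ∧
      ∀ i j : ℕ+, T i j + Y i j - matMul T Y i j = 0 := by
  classical
  set Cs : ℕ → ℝ := fun m => sSup (Set.range fun p : ℕ+ × ℕ+ =>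
    (((max p.1 p.2 : ℕ+) : ℕ) : ℝ) ^ m * ‖T p.1 p.2‖) with hCsdef
  have hCs : ∀ m (i j : ℕ+), MM i j ^ m * ‖T i j‖ ≤ Cs m := fun m i j =>
    le_csSup (hT m) ⟨(i, j), rfl⟩
  have hCs0 : ∀ m, 0 ≤ Cs m := fun m =>
    le_trans (mul_nonneg (pow_nonneg (MM_pos 1 1).le m) (norm_nonneg _)) (hCs m 1 1)
  have hTm : ∀ m (i j : ℕ+), ‖T i j‖ ≤ Cs m / (MM i j)^m := fun m i j => by
    rw [le_div_iff₀ (pow_pos (MM_pos i j) m)]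
    calc ‖T i j‖ * MM i j ^ m = MM i j ^ m * ‖T i j‖ := mul_comm _ _
      _ ≤ Cs m := hCs m i j
  have hπ : (0:ℝ) < π^2/6 := by positivity
  set C : ℝ := Cs 2 with hCdef
  have hC : 0 ≤ C := hCs0 2
  have hT2 : ∀ i j : ℕ+, ‖T i j‖ ≤ C / (MM i j)^2 := hTm 2
  set q : ℝ := π^2/6 * C with hqdef
  have hq0 : 0 ≤ q := mul_nonneg hπ.le hC
  have hq1 : q < 1 := by
    have hsmall' : C < 6/π^2 := hsmall
    calc q = π^2/6 * C := hqdef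
      _ < π^2/6 * (6/π^2) := by exact mul_lt_mul_of_pos_left hsmall' hπ
      _ = 1 := by
        field_simp
  -- summability of the powers at each entry
  have hPnorm : ∀ i j : ℕ+, Summable (fun n : ℕ => ‖Pw T n i j‖) := by
    intro i j
    refine Summable.of_nonneg_of_le (fun n => norm_nonneg _) (fun n => ?_)
      ((summable_geometric_of_lt_one hq0 hq1).mul_left (C / (MM i j)^2))
    calc ‖Pw T n i j‖ ≤ C * q^n / (MM i j)^2 := Q_bound T hC hqdef hT2 n i j
      _ = (C / (MM i j)^2) * q^n := by ring
  have hPsum : ∀ i j : ℕ+, Summable (fun n : ℕ => Pw T n i j) := fun i j =>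
    (hPnorm i j).of_norm
  -- the candidate quasi-inverse
  set Y : ℕ+ → ℕ+ → A := fun i j => -∑' n : ℕ, Pw T n i j with hYdef
  have hYentry : ∀ i j : ℕ+, Y i j = -∑' n : ℕ, Pw T n i j := fun i j => rfl
  -- double summability for the Fubini swaps
  have hgsum : Summable (fun p : ℕ+ × ℕ =>
      (C*C) * ((1/((p.1:ℕ):ℝ)^2) * q^p.2)) :=
    (summable_inv_sq.mul_of_nonneg (summable_geometric_of_lt_one hq0 hq1)
      (fun k => by positivity) (fun n => pow_nonneg hq0 n)).mul_left _
  have hG : ∀ i j : ℕ+, Summable (Function.uncurry fun (k : ℕ+) (n : ℕ) =>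
      T i k * Pw T n k j) := by
    intro i j
    apply Summable.of_norm_bounded hgsum
    rintro ⟨k, n⟩
    calc ‖T i k * Pw T n k j‖ ≤ ‖T i k‖ * ‖Pw T n k j‖ := norm_mul_le _ _
      _ ≤ (C/((k:ℕ):ℝ)^2) * (C * q^n) := by
          apply mul_le_mul ((hT2 i k).trans (relax_right hC i k)) _ (norm_nonneg _)
            (by positivity)
          calc ‖Pw T n k j‖ ≤ C * q^n / (MM k j)^2 := Q_bound T hC hqdef hT2 n k j
            _ ≤ C * q^n := relax_const (mul_nonneg hC (pow_nonneg hq0 n)) k j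
      _ = (C*C) * ((1/((k:ℕ):ℝ)^2) * q^n) := by ring
  have hG' : ∀ i j : ℕ+, Summable (Function.uncurry fun (k : ℕ+) (n : ℕ) =>
      Pw T n i k * T k j) := by
    intro i j
    apply Summable.of_norm_bounded hgsum
    rintro ⟨k, n⟩
    calc ‖Pw T n i k * T k j‖ ≤ ‖Pw T n i k‖ * ‖T k j‖ := norm_mul_le _ _
      _ ≤ (C * q^n) * (C/((k:ℕ):ℝ)^2) := by
          apply mul_le_mul _ ((hT2 k j).trans (relax_left hC k j)) (norm_nonneg _)
            (mul_nonneg hC (pow_nonneg hq0 n))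
          calc ‖Pw T n i k‖ ≤ C * q^n / (MM i k)^2 := Q_bound T hC hqdef hT2 n i k
            _ ≤ C * q^n := relax_const (mul_nonneg hC (pow_nonneg hq0 n)) i k
      _ = (C*C) * ((1/((k:ℕ):ℝ)^2) * q^n) := by ring
  have hTY : ∀ i j : ℕ+, matMul T Y i j = -∑' n : ℕ, Pw T (n+1) i j := by
    intro i j
    calc matMul T Y i j = ∑' k : ℕ+, T i k * -(∑' n : ℕ, Pw T n k j) := rfl
      _ = ∑' k : ℕ+, -(∑' n : ℕ, T i k * Pw T n k j) := by
          refine tsum_congr fun k => ?_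
          rw [mul_neg, ← (hPsum k j).tsum_mul_left (T i k)]
      _ = -∑' (k : ℕ+) (n : ℕ), T i k * Pw T n k j := by rw [tsum_neg]
      _ = -∑' (n : ℕ) (k : ℕ+), T i k * Pw T n k j := by
          rw [Summable.tsum_comm' (hG i j) (fun k => (hG i j).prod_factor k)
            (fun n => (hG i j).prod_symm.prod_factor n)]
      _ = -∑' n : ℕ, Pw T (n+1) i j := rfl
  have hYT : ∀ i j : ℕ+, matMul Y T i j = -∑' n : ℕ, Pw T (n+1) i j := by
    intro i j
    calc matMul Y T i j = ∑' k : ℕ+, (-(∑' n : ℕ, Pw T n i k)) * T k j := rfl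
      _ = ∑' k : ℕ+, -(∑' n : ℕ, Pw T n i k * T k j) := by
          refine tsum_congr fun k => ?_
          rw [neg_mul, ← (hPsum i k).tsum_mul_right (T k j)]
      _ = -∑' (k : ℕ+) (n : ℕ), Pw T n i k * T k j := by rw [tsum_neg]
      _ = -∑' (n : ℕ) (k : ℕ+), Pw T n i k * T k j := by
          rw [Summable.tsum_comm' (hG' i j) (fun k => (hG' i j).prod_factor k)
            (fun n => (hG' i j).prod_symm.prod_factor n)]
      _ = -∑' n : ℕ, matMul (Pw T n) T i j := rfl
      _ = -∑' n : ℕ, Pw T (n+1) i j := by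
          refine congrArg Neg.neg (tsum_congr fun n => ?_)
          rw [← Pw_comm T hC hqdef hq1.le hT2 n]
          rfl
  refine ⟨Y, ?_, ?_, ?_⟩
  · -- rapidly decreasing
    intro m
    set Cm2 : ℝ := Cs (m+2) with hCm2def
    have hCm2 : 0 ≤ Cm2 := hCs0 (m+2)
    set K1 : ℝ := Cm2 * Cm2 * (π^2/6) with hK1def
    set KK : ℝ := Cm2 * Cm2 * C * ((π^2/6) * (π^2/6)) with hKKdef
    set bseq : ℕ → ℝ := fun n => match n with
      | 0 => Cs m
      | 1 => K1
      | (n+2) => KK * q^n with hbseqdef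
    have hbsum : Summable bseq := by
      apply (summable_nat_add_iff 2).1
      exact (summable_geometric_of_lt_one hq0 hq1).mul_left KK
    have hb1 : ∀ i j : ℕ+, MM i j ^ m * ‖Pw T 1 i j‖ ≤ K1 := by
      intro i j
      have h := Pw_one_bound T hCm2 (hTm (m+2)) i j
      have hi0 : (0:ℝ) < ((i:ℕ):ℝ)^m := pow_pos (kpos i) m
      have hj0 : (0:ℝ) < ((j:ℕ):ℝ)^m := pow_pos (kpos j) m
      have hMleq : MM i j ^ m ≤ ((i:ℕ):ℝ)^m * ((j:ℕ):ℝ)^m := by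
        calc MM i j ^ m ≤ (((i:ℕ):ℝ) * ((j:ℕ):ℝ))^m :=
              pow_le_pow_left₀ (MM_pos i j).le (MM_le_mul i j) m
          _ = _ := mul_pow _ _ _
      calc MM i j ^ m * ‖Pw T 1 i j‖
          ≤ (((i:ℕ):ℝ)^m * ((j:ℕ):ℝ)^m) * (Cm2 * (Cm2 / ((j:ℕ):ℝ)^m) / ((i:ℕ):ℝ)^m * (π^2/6)) :=
            mul_le_mul hMleq h (norm_nonneg _) (by positivity)
        _ = K1 := by
            rw [hK1def]
            field_simp
    have hbn : ∀ (n : ℕ) (i j : ℕ+), MM i j ^ m * ‖Pw T (n+2) i j‖ ≤ KK * q^n := by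
      intro n i j
      have h := Pw_m_bound T hC hqdef hq1.le hCm2 hT2 (hTm (m+2)) n i j
      have hi0 : (0:ℝ) < ((i:ℕ):ℝ)^m := pow_pos (kpos i) m
      have hj0 : (0:ℝ) < ((j:ℕ):ℝ)^m := pow_pos (kpos j) m
      have hMleq : MM i j ^ m ≤ ((i:ℕ):ℝ)^m * ((j:ℕ):ℝ)^m := by
        calc MM i j ^ m ≤ (((i:ℕ):ℝ) * ((j:ℕ):ℝ))^m :=
              pow_le_pow_left₀ (MM_pos i j).le (MM_le_mul i j) m
          _ = _ := mul_pow _ _ _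
      have hrhs0 : 0 ≤ Cm2 * ((C * q^n) * Cm2 / ((j:ℕ):ℝ)^m * (π^2/6)) / ((i:ℕ):ℝ)^m * (π^2/6) := by
        have : 0 ≤ C * q^n := mul_nonneg hC (pow_nonneg hq0 n)
        positivity
      calc MM i j ^ m * ‖Pw T (n+2) i j‖
          ≤ (((i:ℕ):ℝ)^m * ((j:ℕ):ℝ)^m) *
            (Cm2 * ((C * q^n) * Cm2 / ((j:ℕ):ℝ)^m * (π^2/6)) / ((i:ℕ):ℝ)^m * (π^2/6)) :=
            mul_le_mul hMleq h (norm_nonneg _) (by positivity)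
        _ = KK * q^n := by
            rw [hKKdef]
            field_simp
    refine ⟨∑' n : ℕ, bseq n, ?_⟩
    rintro x ⟨⟨i, j⟩, rfl⟩
    show MM i j ^ m * ‖Y i j‖ ≤ ∑' n : ℕ, bseq n
    have hm0 : (0:ℝ) ≤ MM i j ^ m := pow_nonneg (MM_pos i j).le m
    calc MM i j ^ m * ‖Y i j‖ = MM i j ^ m * ‖∑' n : ℕ, Pw T n i j‖ := by
          rw [hYentry i j, norm_neg]
      _ ≤ MM i j ^ m * ∑' n : ℕ, ‖Pw T n i j‖ :=
          mul_le_mul_of_nonneg_left (norm_tsum_le_tsum_norm (hPnorm i j)) hm0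
      _ = ∑' n : ℕ, MM i j ^ m * ‖Pw T n i j‖ := tsum_mul_left.symm
      _ ≤ ∑' n : ℕ, bseq n := by
          apply Summable.tsum_le_tsum _ ((hPnorm i j).mul_left _) hbsum
          intro n
          match n with
          | 0 => exact hCs m i j
          | 1 => exact hb1 i j
          | (n+2) => exact hbn n i j
  · funext i j
    rw [hTY i j, hYT i j]
  · intro i j
    have h0 : ∑' n : ℕ, Pw T n i j = Pw T 0 i j + ∑' n : ℕ, Pw T (n+1) i j :=
      Summable.tsum_eq_zero_add (hPsum i j)
    rw [hTY i j, hYentry i j, h0]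
    show T i j + -(T i j + ∑' n : ℕ, Pw T (n+1) i j) - -∑' n : ℕ, Pw T (n+1) i j = 0
    abel
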